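/- Let a : ℕ → ℕ satisfy a(5)=6, a(6)=7, a(7)=9, a(8)=11, a(9)=14 and a(n) = a(n−2) + a(n−5) for n ≥ 10, and let G : ℕ → ℕ satisfy G(1)=2, G(2)=3, G(3)=4, G(4)=5, G(5)=7 and G(n) = G(n−1) + G(n−5) for n ≥ 6. Then a(n) ≤ G(n) for all n ≥ 5. -/
import Mathlib

theorem stmt_15 (a G : ℕ → ℕ)
    (ha5 : a 5 = 6) (ha6 : a 6 = 7) (ha7 : a 7 = 9) (ha8 : a 8 = 11)
    (ha9 : a 9 = 14)
    (ha : ∀ n : ℕ, 10 ≤ n → a n = a (n - 2) + a (n - 5))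
    (hG1 : G 1 = 2) (hG2 : G 2 = 3) (hG3 : G 3 = 4) (hG4 : G 4 = 5)
    (hG5 : G 5 = 7)
    (hG : ∀ n : ℕ, 6 ≤ n → G n = G (n - 1) + G (n - 5)) :
    ∀ n : ℕ, 5 ≤ n → a n ≤ G n := by
  have hGmono : ∀ m : ℕ, 5 ≤ m → G m ≤ G (m + 1) := by
    intro m hm
    have h := hG (m + 1) (by omega)
    simp only [Nat.add_sub_cancel] at h
    omega
  intro n
  induction n using Nat.strong_induction_on with
  | _ n ih =>
    intro hn
    by_cases h10 : n < 10
    · have g6 := hG 6 (by omega)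
      have g7 := hG 7 (by omega)
      have g8 := hG 8 (by omega)
      have g9 := hG 9 (by omega)
      norm_num at g6 g7 g8 g9
      interval_cases n <;> omega
    · have h2 : a (n - 2) ≤ G (n - 2) := ih (n - 2) (by omega) (by omega)
      have h5 : a (n - 5) ≤ G (n - 5) := ih (n - 5) (by omega) (by omega)
      have e : n - 2 + 1 = n - 1 := by omega
      have hg := hGmono (n - 2) (by omega)
      rw [e] at hg
      have h1 := ha n (by omega)
      have h2' := hG n (by omega)
      omega
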